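/- If G is the line graph of a simple graph, then χ(G) ≤ Δ₂(G) + 3. -/

import Mathlib

open SimpleGraph

variable {V : Type*}

/-- The codegree of two vertices: the number of their common neighbors. -/
noncomputable def codeg (H : SimpleGraph V) (u v : V) : ℕ :=
  Nat.card {x : V // H.Adj u x ∧ H.Adj v x}

/-- The maximum codegree `Δ₂`: the maximum of `codeg` over pairs of distinct vertices. -/
noncomputable def maxCodeg (H : SimpleGraph V) : ℕ :=
  sSup {n | ∃ u v : V, u ≠ v ∧ codeg H u v = n}

/-- The anti-codegree: the number of vertices distinct from `u, v` adjacent to neither. -/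
noncomputable def acodeg (H : SimpleGraph V) (u v : V) : ℕ :=
  Nat.card {x : V // x ≠ u ∧ x ≠ v ∧ ¬H.Adj u x ∧ ¬H.Adj v x}

/-- The maximum anti-codegree over pairs of distinct vertices. -/
noncomputable def macodeg (H : SimpleGraph V) : ℕ :=
  sSup {n | ∃ u v : V, u ≠ v ∧ acodeg H u v = n}

/-- A matching, as a set of pairwise vertex-disjoint edges. -/
def IsMatchingSet (H : SimpleGraph V) (M : Finset (Sym2 V)) : Prop :=
  (∀ e ∈ M, e ∈ H.edgeSet) ∧ ∀ e ∈ M, ∀ f ∈ M, e ≠ f → ∀ v : V, v ∈ e → v ∉ f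

/-- The matching number: maximum size of a matching. -/
noncomputable def matchingNumber (H : SimpleGraph V) : ℕ :=
  sSup {n | ∃ M : Finset (Sym2 V), IsMatchingSet H M ∧ M.card = n}

/-- The clique cover number: the least `n` such that `V` can be partitioned into `n` cliques. -/
noncomputable def cliqueCoverNumber (H : SimpleGraph V) : ℕ :=
  sInf {n | ∃ c : V → Fin n, ∀ u v : V, c u = c v → u = v ∨ H.Adj u v}

/-- A graph is claw-free if no neighborhood contains three pairwise nonadjacent vertices. -/
def ClawFree (G : SimpleGraph V) : Prop :=
  ∀ v a b c : V, G.Adj v a → G.Adj v b → G.Adj v c →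
    a ≠ b → a ≠ c → b ≠ c → G.Adj a b ∨ G.Adj a c ∨ G.Adj b c

/-- Maximum edge-codegree `Δ_e`: maximum codegree over pairs of adjacent vertices. -/
noncomputable def maxEdgeCodeg (G : SimpleGraph V) : ℕ :=
  sSup {n | ∃ u v : V, G.Adj u v ∧ codeg G u v = n}

set_option linter.unusedSectionVars false
namespace VizingPf

open scoped Classical
attribute [-instance] SimpleGraph.instDecidableRelAdjDeleteEdgesOfDecidablePredSym2MemSetOfDecidableEq

variable {V : Type*}

/-- A proper partial-free edge coloring with colors `< n`. -/
def Proper (H : SimpleGraph V) (n : ℕ) (c : Sym2 V → ℕ) : Prop :=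
  (∀ e ∈ H.edgeSet, c e < n) ∧
  ∀ ⦃a b b' : V⦄, H.Adj a b → H.Adj a b' → b ≠ b' → c s(a, b) ≠ c s(a, b')

/-- Color `γ` does not appear on any edge of `H` at `v`. -/
def freeAt (H : SimpleGraph V) (c : Sym2 V → ℕ) (v : V) (γ : ℕ) : Prop :=
  ∀ z, H.Adj v z → c s(v, z) ≠ γ

variable [Fintype V]

lemma exists_free {H : SimpleGraph V} {k : ℕ} (c : Sym2 V → ℕ) {v : V}
    (h : H.degree v ≤ k) : ∃ γ, γ < k + 1 ∧ freeAt H c v γ := by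
  have hcard : ((H.neighborFinset v).image (fun z => c s(v, z))).card ≤ k :=
    le_trans Finset.card_image_le (by rwa [card_neighborFinset_eq_degree])
  have hne : (Finset.range (k + 1) \ (H.neighborFinset v).image (fun z => c s(v, z))).Nonempty := by
    apply Finset.card_pos.mp
    have := Finset.le_card_sdiff ((H.neighborFinset v).image (fun z => c s(v, z)))
      (Finset.range (k + 1))
    rw [Finset.card_range] at this
    omega
  obtain ⟨γ, hγ⟩ := hne
  rw [Finset.mem_sdiff, Finset.mem_range] at hγ
  refine ⟨γ, hγ.1, fun z hz hc => hγ.2 ?_⟩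
  exact Finset.mem_image.mpr ⟨z, (mem_neighborFinset _ _ _).mpr hz, hc⟩

lemma degree_mono {H G : SimpleGraph V} (h : H ≤ G) (v : V) : H.degree v ≤ G.degree v := by
  apply Finset.card_le_card
  intro z hz
  rw [mem_neighborFinset] at *
  exact h hz

/-- The subgraph of edges colored α or β. -/
def kempe (H : SimpleGraph V) (c : Sym2 V → ℕ) (α β : ℕ) : SimpleGraph V where
  Adj a b := H.Adj a b ∧ (c s(a, b) = α ∨ c s(a, b) = β)
  symm := by
    constructor
    intro a b ⟨h1, h2⟩
    refine ⟨h1.symm, ?_⟩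
    rwa [Sym2.eq_swap] at h2
  loopless := ⟨fun a h => H.loopless.irrefl a h.1⟩

lemma kempe_adj {H : SimpleGraph V} {c : Sym2 V → ℕ} {α β : ℕ} {a b : V} :
    (kempe H c α β).Adj a b ↔ H.Adj a b ∧ (c s(a, b) = α ∨ c s(a, b) = β) := Iff.rfl

lemma kempe_degree_le {H : SimpleGraph V} {c : Sym2 V → ℕ} {α β n : ℕ}
    (hc : Proper H n c) (v : V) : (kempe H c α β).degree v ≤ 2 := by
  rw [← card_neighborFinset_eq_degree]
  have : (kempe H c α β).neighborFinset v ⊆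
      (H.neighborFinset v).filter (fun z => c s(v, z) = α ∨ c s(v, z) = β) := by
    intro z hz
    rw [mem_neighborFinset] at hz
    rw [Finset.mem_filter, mem_neighborFinset]
    exact ⟨hz.1, hz.2⟩
  refine le_trans (Finset.card_le_card this) ?_
  have himg : ((H.neighborFinset v).filter
      (fun z => c s(v, z) = α ∨ c s(v, z) = β)).card ≤ ({α, β} : Finset ℕ).card := by
    apply Finset.card_le_card_of_injOn (fun z => c s(v, z))
    · intro z hz
      rw [Finset.mem_coe, Finset.mem_filter] at hz
      rcases hz.2 with h | h <;> simp [h]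
    · intro z1 h1 z2 h2 hcc
      rw [Finset.mem_coe, Finset.mem_filter, mem_neighborFinset] at h1 h2
      by_contra hne
      exact hc.2 h1.1 h2.1 hne hcc
  refine le_trans himg ?_
  exact le_trans (Finset.card_insert_le _ _) (by simp)

lemma kempe_degree_le_one' {H : SimpleGraph V} {c : Sym2 V → ℕ} {α β n : ℕ}
    (hc : Proper H n c) {v : V} (hf : freeAt H c v α) : (kempe H c α β).degree v ≤ 1 := by
  rw [← card_neighborFinset_eq_degree]
  have himg : ((kempe H c α β).neighborFinset v).card ≤ ({β} : Finset ℕ).card := by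
    apply Finset.card_le_card_of_injOn (fun z => c s(v, z))
    · intro z hz
      rw [Finset.mem_coe, mem_neighborFinset, kempe_adj] at hz
      rcases hz.2 with h | h
      · exact absurd h (hf z hz.1)
      · simp [h]
    · intro z1 h1 z2 h2 hcc
      rw [Finset.mem_coe, mem_neighborFinset, kempe_adj] at h1 h2
      by_contra hne
      exact hc.2 h1.1 h2.1 hne hcc
  simpa using himg

lemma kempe_degree_le_one {H : SimpleGraph V} {c : Sym2 V → ℕ} {α β n : ℕ}
    (hc : Proper H n c) {v : V} (hf : freeAt H c v β) : (kempe H c α β).degree v ≤ 1 := by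
  rw [← card_neighborFinset_eq_degree]
  have himg : ((kempe H c α β).neighborFinset v).card ≤ ({α} : Finset ℕ).card := by
    apply Finset.card_le_card_of_injOn (fun z => c s(v, z))
    · intro z hz
      rw [Finset.mem_coe, mem_neighborFinset, kempe_adj] at hz
      rcases hz.2 with h | h
      · simp [h]
      · exact absurd h (hf z hz.1)
    · intro z1 h1 z2 h2 hcc
      rw [Finset.mem_coe, mem_neighborFinset, kempe_adj] at h1 h2
      by_contra hne
      exact hc.2 h1.1 h2.1 hne hcc
  simpa using himg

section Flip

variable {H : SimpleGraph V} {c : Sym2 V → ℕ} {α β : ℕ} {w : V}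

/-- Swap colors α and β on the Kempe component of `w`. -/
noncomputable def flip (H : SimpleGraph V) (c : Sym2 V → ℕ) (α β : ℕ) (w : V) :
    Sym2 V → ℕ :=
  fun e => if (∃ v ∈ e, (kempe H c α β).Reachable w v) ∧ e ∈ (kempe H c α β).edgeSet
    then (if c e = α then β else α) else c e

lemma reach_all_of_mem_edge {e : Sym2 V} (he : e ∈ (kempe H c α β).edgeSet)
    {v : V} (hv : v ∈ e) (hr : (kempe H c α β).Reachable w v) :
    ∀ u ∈ e, (kempe H c α β).Reachable w u := by
  induction e with
  | _ a b =>
    rw [mem_edgeSet] at he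
    intro u hu
    rw [Sym2.mem_iff] at hv hu
    rcases hv with rfl | rfl <;> rcases hu with rfl | rfl
    · exact hr
    · exact hr.trans he.reachable
    · exact hr.trans he.symm.reachable
    · exact hr

lemma flip_eq_of_unreachable {u : V} (h : ¬ (kempe H c α β).Reachable w u) (z : V) :
    flip H c α β w s(u, z) = c s(u, z) := by
  rw [flip, if_neg]
  rintro ⟨⟨v, hv, hr⟩, he⟩
  exact h (reach_all_of_mem_edge he hv hr u (by simp))

lemma kempe_edge_mem {e : Sym2 V} (he : e ∈ (kempe H c α β).edgeSet) :
    e ∈ H.edgeSet ∧ (c e = α ∨ c e = β) := by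
  induction e with
  | _ a b =>
    rw [mem_edgeSet] at he ⊢
    exact ⟨he.1, he.2⟩

lemma kempe_mem_edgeSet {a b : V} (h : H.Adj a b) (hco : c s(a, b) = α ∨ c s(a, b) = β) :
    s(a, b) ∈ (kempe H c α β).edgeSet := (mem_edgeSet _).mpr ⟨h, hco⟩

lemma flip_eq_of_not_colored {e : Sym2 V} (h1 : c e ≠ α) (h2 : c e ≠ β) :
    flip H c α β w e = c e := by
  rw [flip, if_neg]
  rintro ⟨-, he⟩
  rcases (kempe_edge_mem he).2 with h | h
  · exact h1 h
  · exact h2 h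

lemma flip_proper {n : ℕ} (hc : Proper H n c) (hαβ : α ≠ β) (hα : α < n) (hβ : β < n) :
    Proper H n (flip H c α β w) := by
  constructor
  · intro e he
    by_cases hcond : (∃ v ∈ e, (kempe H c α β).Reachable w v) ∧ e ∈ (kempe H c α β).edgeSet
    · rw [flip, if_pos hcond]
      split <;> assumption
    · rw [flip, if_neg hcond]
      exact hc.1 e he
  · intro a b b' hab hab' hbb'
    have heb : s(a, b) ∈ H.edgeSet := (mem_edgeSet _).mpr hab
    have heb' : s(a, b') ∈ H.edgeSet := (mem_edgeSet _).mpr hab'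
    have horig : c s(a, b) ≠ c s(a, b') := hc.2 hab hab' hbb'
    by_cases h1 : (∃ v ∈ s(a, b), (kempe H c α β).Reachable w v) ∧
        s(a, b) ∈ (kempe H c α β).edgeSet <;>
      by_cases h2 : (∃ v ∈ s(a, b'), (kempe H c α β).Reachable w v) ∧
        s(a, b') ∈ (kempe H c α β).edgeSet
    · rw [flip, if_pos h1, flip, if_pos h2]
      have m1 := (kempe_edge_mem h1.2).2
      have m2 := (kempe_edge_mem h2.2).2
      rcases m1 with m1 | m1 <;> rcases m2 with m2 | m2 <;>
        simp_all [hαβ, Ne.symm hαβ]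
    · -- s(a,b) flipped, s(a,b') not
      obtain ⟨⟨v, hv, hr⟩, hek⟩ := h1
      have hra : (kempe H c α β).Reachable w a :=
        reach_all_of_mem_edge hek hv hr a (by simp)
      have hnc : c s(a, b') ≠ α ∧ c s(a, b') ≠ β := by
        constructor <;> intro hco <;>
          exact h2 ⟨⟨a, by simp, hra⟩, kempe_mem_edgeSet hab' (by tauto)⟩
      rw [flip, if_pos ⟨⟨v, hv, hr⟩, hek⟩, flip_eq_of_not_colored hnc.1 hnc.2]
      split
      · exact fun h => hnc.2 h.symm
      · exact fun h => hnc.1 h.symm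
    · -- s(a,b') flipped, s(a,b) not
      obtain ⟨⟨v, hv, hr⟩, hek⟩ := h2
      have hra : (kempe H c α β).Reachable w a :=
        reach_all_of_mem_edge hek hv hr a (by simp)
      have hnc : c s(a, b) ≠ α ∧ c s(a, b) ≠ β := by
        constructor <;> intro hco <;>
          exact h1 ⟨⟨a, by simp, hra⟩, kempe_mem_edgeSet hab (by tauto)⟩
      rw [flip_eq_of_not_colored hnc.1 hnc.2, flip, if_pos ⟨⟨v, hv, hr⟩, hek⟩]
      split
      · exact hnc.2
      · exact hnc.1
    · rw [flip, if_neg h1, flip, if_neg h2]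
      exact horig

lemma flip_free_swap1 (hαβ : α ≠ β) {u : V} (hr : (kempe H c α β).Reachable w u)
    (hf : freeAt H c u α) : freeAt H (flip H c α β w) u β := by
  intro z hz
  by_cases hP : (∃ v ∈ s(u, z), (kempe H c α β).Reachable w v) ∧
      s(u, z) ∈ (kempe H c α β).edgeSet
  · rw [flip, if_pos hP]
    have := (kempe_edge_mem hP.2).2
    have hne := hf z hz
    have hcz : c s(u, z) = β := by tauto
    rw [if_neg (by rw [hcz]; exact Ne.symm hαβ)]
    exact hαβ
  · rw [flip, if_neg hP]
    intro hcz
    exact hP ⟨⟨u, by simp, hr⟩, kempe_mem_edgeSet hz (Or.inr hcz)⟩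

lemma flip_free_swap2 (hαβ : α ≠ β) {u : V} (hr : (kempe H c α β).Reachable w u)
    (hf : freeAt H c u β) : freeAt H (flip H c α β w) u α := by
  intro z hz
  by_cases hP : (∃ v ∈ s(u, z), (kempe H c α β).Reachable w v) ∧
      s(u, z) ∈ (kempe H c α β).edgeSet
  · rw [flip, if_pos hP]
    have := (kempe_edge_mem hP.2).2
    have hne := hf z hz
    have hcz : c s(u, z) = α := by tauto
    rw [if_pos hcz]
    exact Ne.symm hαβ
  · rw [flip, if_neg hP]
    intro hcz
    exact hP ⟨⟨u, by simp, hr⟩, kempe_mem_edgeSet hz (Or.inl hcz)⟩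

lemma flip_free_of_ne {γ : ℕ} (hγα : γ ≠ α) (hγβ : γ ≠ β) {u : V}
    (hf : freeAt H c u γ) : freeAt H (flip H c α β w) u γ := by
  intro z hz
  by_cases hP : (∃ v ∈ s(u, z), (kempe H c α β).Reachable w v) ∧
      s(u, z) ∈ (kempe H c α β).edgeSet
  · rw [flip, if_pos hP]
    split
    · exact Ne.symm hγβ
    · exact Ne.symm hγα
  · rw [flip, if_neg hP]
    exact hf z hz

lemma flip_free_of_unreachable {γ : ℕ} {u : V} (h : ¬ (kempe H c α β).Reachable w u)
    (hf : freeAt H c u γ) : freeAt H (flip H c α β w) u γ := by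
  intro z hz
  rw [flip_eq_of_unreachable h]
  exact hf z hz


end Flip

section Paths

lemma two_le_degree_of_internal {H : SimpleGraph V} {a b v : V} (p : H.Walk a b)
    (hp : p.IsPath) (hv : v ∈ p.support) (hva : v ≠ a) (hvb : v ≠ b) :
    2 ≤ H.degree v := by
  induction p with
  | nil => simp at hv; exact absurd hv hva
  | @cons u w b h p ih =>
    rw [Walk.support_cons, List.mem_cons] at hv
    rcases hv with rfl | hv
    · exact absurd rfl hva
    rw [Walk.cons_isPath_iff] at hp
    by_cases hvw : v = w
    · subst hvw
      cases p with
      | nil => exact absurd rfl hvb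
      | @cons _ d _ h2 p' =>
        have hd : d ∈ (Walk.cons h2 p').support := by
          rw [Walk.support_cons]
          exact List.mem_cons_of_mem _ p'.start_mem_support
        have hud : u ≠ d := fun h' => hp.2 (h' ▸ hd)
        have hsub : ({u, d} : Finset V) ⊆ H.neighborFinset v := by
          intro z hz
          rw [Finset.mem_insert, Finset.mem_singleton] at hz
          rw [mem_neighborFinset]
          rcases hz with rfl | rfl
          · exact h.symm
          · exact h2
        calc 2 = ({u, d} : Finset V).card := by rw [Finset.card_insert_of_notMem (by simpa using hud), Finset.card_singleton]
        _ ≤ (H.neighborFinset v).card := Finset.card_le_card hsub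
        _ = H.degree v := rfl
    · exact ih hp.1 hv hvw hvb

lemma path_prefix {H₀ : SimpleGraph V} : ∀ (n : ℕ) (H : SimpleGraph V),
    (∀ z, H.degree z ≤ 2) → ∀ (u v v' : V) (P : H.Walk u v) (Q : H.Walk u v'),
    P.IsPath → Q.IsPath → H.degree u ≤ 1 → P.length ≤ n →
    v' ∈ P.support ∨ v ∈ Q.support := by
  intro n
  induction n with
  | zero =>
    intro H hdeg u v v' P Q hP hQ hu hlen
    cases P with
    | nil => exact Or.inr Q.start_mem_support
    | cons h p => simp [Walk.length_cons] at hlen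
  | succ n ih =>
    intro H hdeg u v v' P Q hP hQ hu hlen
    cases P with
    | nil => exact Or.inr Q.start_mem_support
    | @cons _ a _ h P' =>
      cases Q with
      | nil => exact Or.inl ((Walk.cons h P').start_mem_support)
      | @cons _ b _ h2 Q' =>
        -- a = b since degree u ≤ 1
        have hab : a = b := by
          have ha : a ∈ H.neighborFinset u := (mem_neighborFinset _ _ _).mpr h
          have hb : b ∈ H.neighborFinset u := (mem_neighborFinset _ _ _).mpr h2
          exact Finset.card_le_one.mp hu a ha b hb
        subst hab
        rw [Walk.cons_isPath_iff] at hP hQ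
        set H' := H.deleteEdges {s(u, a)} with hH'
        have hPe : ∀ e ∈ P'.edges, e ∈ H'.edgeSet := by
          intro e he
          rw [hH', edgeSet_deleteEdges]
          refine ⟨P'.edges_subset_edgeSet he, ?_⟩
          rw [Set.mem_singleton_iff]
          rintro rfl
          exact hP.2 (P'.fst_mem_support_of_mem_edges he)
        have hQe : ∀ e ∈ Q'.edges, e ∈ H'.edgeSet := by
          intro e he
          rw [hH', edgeSet_deleteEdges]
          refine ⟨Q'.edges_subset_edgeSet he, ?_⟩
          rw [Set.mem_singleton_iff]
          rintro rfl
          exact hQ.2 (Q'.fst_mem_support_of_mem_edges he)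
        have hdeg' : ∀ z, H'.degree z ≤ 2 :=
          fun z => le_trans (degree_mono (deleteEdges_le _) z) (hdeg z)
        have ha1 : H'.degree a ≤ 1 := by
          have hsub : H'.neighborFinset a ⊆ (H.neighborFinset a).erase u := by
            intro z hz
            rw [mem_neighborFinset, hH', deleteEdges_adj] at hz
            rw [Finset.mem_erase, mem_neighborFinset]
            refine ⟨?_, hz.1⟩
            rintro rfl
            exact hz.2 (by rw [Sym2.eq_swap]; exact Set.mem_singleton _)
          have := Finset.card_le_card hsub
          have hu' : u ∈ H.neighborFinset a := (mem_neighborFinset _ _ _).mpr h.symm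
          have := Finset.card_erase_of_mem hu'
          have hda := hdeg a
          unfold SimpleGraph.degree at *
          omega
        have key := ih H' hdeg' a v v' (P'.transfer H' hPe) (Q'.transfer H' hQe)
          (by rw [Walk.isPath_def, Walk.support_transfer]; exact hP.1.support_nodup)
          (by rw [Walk.isPath_def, Walk.support_transfer]; exact hQ.1.support_nodup)
          ha1
          (by rw [Walk.length_transfer]; simpa [Walk.length_cons] using hlen)
        rw [Walk.support_transfer, Walk.support_transfer] at key
        rcases key with hk | hk
        · exact Or.inl (by rw [Walk.support_cons]; exact List.mem_cons_of_mem _ hk)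
        · exact Or.inr (by rw [Walk.support_cons]; exact List.mem_cons_of_mem _ hk)

lemma no_three_pendant {H : SimpleGraph V} (hdeg : ∀ z, H.degree z ≤ 2)
    {a b c : V} (hab : a ≠ b) (hac : a ≠ c) (hbc : b ≠ c)
    (ha : H.degree a ≤ 1) (hb : H.degree b ≤ 1) (hc : H.degree c ≤ 1)
    (hrb : H.Reachable a b) (hrc : H.Reachable a c) : False := by
  obtain ⟨P0⟩ := hrb
  obtain ⟨Q0⟩ := hrc
  have hP := P0.toPath
  have hQ := Q0.toPath
  rcases path_prefix (H₀ := H) (hP.1.length) H hdeg a b c hP.1 hQ.1 hP.2 hQ.2 ha le_rfl with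
    hk | hk
  · exact absurd (two_le_degree_of_internal hP.1 hP.2 hk (Ne.symm hac) hbc.symm) (by omega)
  · exact absurd (two_le_degree_of_internal hQ.1 hQ.2 hk (Ne.symm hab) hbc) (by omega)

end Paths

section Rotate

variable {G : SimpleGraph V} {x y : V}

/-- Source vertex for the rotated coloring. -/
noncomputable def srcv (ys : List V) (x : V) (i : ℕ) (u : V) : V :=
  if h : ∃ l, l < i ∧ u = ys.getD l x then ys.getD (h.choose + 1) x else u

/-- The fan-rotated coloring. -/
noncomputable def rot (c : Sym2 V → ℕ) (x : V) (ys : List V) (i : ℕ) : Sym2 V → ℕ :=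
  fun e => if h : x ∈ e then c s(x, srcv ys x i (Sym2.Mem.other h)) else c e

lemma getD_inj {ys : List V} (hnd : ys.Nodup) {l l' : ℕ}
    (hl : l < ys.length) (hl' : l' < ys.length)
    (h : ys.getD l x = ys.getD l' x) : l = l' := by
  rw [List.getD_eq_getElem _ _ hl, List.getD_eq_getElem _ _ hl'] at h
  exact (hnd.getElem_inj_iff).mp h

lemma getD_mem {ys : List V} {l : ℕ} (hl : l < ys.length) : ys.getD l x ∈ ys := by
  rw [List.getD_eq_getElem _ _ hl]
  exact List.getElem_mem hl

lemma srcv_spec1 {ys : List V} (hnd : ys.Nodup) {i : ℕ} (hi : i ≤ ys.length) {l : ℕ}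
    (hl : l < i) : srcv ys x i (ys.getD l x) = ys.getD (l + 1) x := by
  have h : ∃ l', l' < i ∧ ys.getD l x = ys.getD l' x := ⟨l, hl, rfl⟩
  rw [srcv, dif_pos h]
  have hc := h.choose_spec
  have : h.choose = l :=
    getD_inj hnd (lt_of_lt_of_le hc.1 hi) (lt_of_lt_of_le hl hi) hc.2.symm
  rw [this]

lemma srcv_spec2 {ys : List V} {i : ℕ} {u : V} (h : ∀ l, l < i → u ≠ ys.getD l x) :
    srcv ys x i u = u := by
  rw [srcv, dif_neg]
  rintro ⟨l, hl, he⟩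
  exact h l hl he

lemma rot_eq_of_not_mem {c : Sym2 V → ℕ} {ys : List V} {i : ℕ} {e : Sym2 V} (h : x ∉ e) :
    rot c x ys i e = c e := by
  rw [rot, dif_neg h]

lemma rot_pair {c : Sym2 V → ℕ} {ys : List V} {i : ℕ} (u : V) :
    rot c x ys i s(x, u) = c s(x, srcv ys x i u) := by
  have hx : x ∈ s(x, u) := by simp
  rw [rot, dif_pos hx]
  have h2 : Sym2.Mem.other hx = u := Sym2.congr_right.mp (Sym2.other_spec hx)
  rw [h2]

lemma rotate_extend {k : ℕ} (hxy : G.Adj x y)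
    (c : Sym2 V → ℕ) (hc : Proper (G.deleteEdges {s(x, y)}) (k + 1) c)
    (ys : List V) (hys0 : ys.getD 0 x = y)
    (hnd : ys.Nodup) (hadj : ∀ v ∈ ys, G.Adj x v)
    (i : ℕ) (hi : i < ys.length)
    (hfan : ∀ l, l + 1 ≤ i →
      freeAt (G.deleteEdges {s(x, y)}) c (ys.getD l x) (c s(x, ys.getD (l + 1) x)))
    (γ : ℕ) (hγ : γ < k + 1)
    (hγx : freeAt (G.deleteEdges {s(x, y)}) c x γ)
    (hγi : freeAt (G.deleteEdges {s(x, y)}) c (ys.getD i x) γ) :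
    ∃ c', Proper G (k + 1) c' := by
  set G' := G.deleteEdges {s(x, y)} with hG'
  set yi := ys.getD i x with hyi
  set Gi := G.deleteEdges {s(x, yi)} with hGi
  set r := rot c x ys i with hr
  have hyi_mem : yi ∈ ys := getD_mem hi
  have hyix : G.Adj x yi := hadj _ hyi_mem
  -- basic adjacency transfer facts
  have hG'adj_l : ∀ l, 0 < l → l < ys.length → G'.Adj x (ys.getD l x) := by
    intro l hl0 hll
    rw [hG', deleteEdges_adj]
    refine ⟨hadj _ (getD_mem hll), ?_⟩
    rw [Set.mem_singleton_iff, Sym2.congr_right]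
    intro he
    rw [← hys0] at he
    exact (by omega : l ≠ 0) (getD_inj hnd hll (by omega) he)
  have hsrcv_adj : ∀ u, Gi.Adj x u → G'.Adj x (srcv ys x i u) := by
    intro u hu
    by_cases h : ∃ l, l < i ∧ u = ys.getD l x
    · obtain ⟨l, hl, rfl⟩ := h
      rw [srcv_spec1 hnd (le_of_lt hi) hl]
      exact hG'adj_l (l + 1) (by omega) (by omega)
    · push_neg at h
      rw [srcv_spec2 h]
      rw [hGi, deleteEdges_adj] at hu
      rw [hG', deleteEdges_adj]
      refine ⟨hu.1, ?_⟩
      rw [Set.mem_singleton_iff, Sym2.congr_right]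
      intro he
      rcases Nat.eq_zero_or_pos i with hi0 | hi0
      · apply hu.2
        rw [Set.mem_singleton_iff, Sym2.congr_right, hyi, hi0, hys0]
        exact he
      · exact h 0 hi0 (he.trans hys0.symm)
  have hsrcv_inj : ∀ u u', Gi.Adj x u → Gi.Adj x u' →
      srcv ys x i u = srcv ys x i u' → u = u' := by
    intro u u' hu hu' heq
    by_cases h1 : ∃ l, l < i ∧ u = ys.getD l x <;>
      by_cases h2 : ∃ l, l < i ∧ u' = ys.getD l x
    · obtain ⟨l, hl, rfl⟩ := h1
      obtain ⟨l', hl', rfl⟩ := h2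
      rw [srcv_spec1 hnd (le_of_lt hi) hl, srcv_spec1 hnd (le_of_lt hi) hl'] at heq
      have := getD_inj hnd (by omega) (by omega) heq
      have : l = l' := by omega
      rw [this]
    · exfalso
      obtain ⟨l, hl, rfl⟩ := h1
      push_neg at h2
      rw [srcv_spec1 hnd (le_of_lt hi) hl, srcv_spec2 h2] at heq
      have hli : l + 1 = i := by
        by_contra hne
        exact h2 (l + 1) (by omega) heq.symm
      rw [hGi, deleteEdges_adj] at hu'
      apply hu'.2
      rw [Set.mem_singleton_iff, Sym2.congr_right, hyi, ← hli]
      exact heq.symm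
    · exfalso
      obtain ⟨l, hl, rfl⟩ := h2
      push_neg at h1
      rw [srcv_spec1 hnd (le_of_lt hi) hl, srcv_spec2 h1] at heq
      have hli : l + 1 = i := by
        by_contra hne
        exact h1 (l + 1) (by omega) heq
      rw [hGi, deleteEdges_adj] at hu
      apply hu.2
      rw [Set.mem_singleton_iff, Sym2.congr_right, hyi, ← hli]
      exact heq
    · push_neg at h1 h2
      rwa [srcv_spec2 h1, srcv_spec2 h2] at heq
  have hGi_sub_G' : ∀ a b : V, a ≠ x → b ≠ x → Gi.Adj a b → G'.Adj a b := by
    intro a b ha hb hab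
    rw [hGi, deleteEdges_adj] at hab
    rw [hG', deleteEdges_adj]
    refine ⟨hab.1, ?_⟩
    rw [Set.mem_singleton_iff]
    intro he
    have : x ∈ s(a, b) := he ▸ (by simp : x ∈ s(x, y))
    rw [Sym2.mem_iff] at this
    rcases this with h | h
    · exact ha h.symm
    · exact hb h.symm
  -- the rotated coloring is proper on Gi
  have hbound : ∀ e ∈ Gi.edgeSet, r e < k + 1 := by
    intro e he
    induction e with
    | _ a b =>
      rw [mem_edgeSet] at he
      by_cases hax : a = x
      · subst hax
        rw [hr, rot_pair]
        exact hc.1 _ ((mem_edgeSet _).mpr (hsrcv_adj b he))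
      · by_cases hbx : b = x
        · subst hbx
          rw [Sym2.eq_swap, hr, rot_pair]
          exact hc.1 _ ((mem_edgeSet _).mpr (hsrcv_adj a he.symm))
        · rw [hr, rot_eq_of_not_mem (by rw [Sym2.mem_iff]; push_neg; exact ⟨Ne.symm hax, Ne.symm hbx⟩)]
          exact hc.1 _ ((mem_edgeSet _).mpr (hGi_sub_G' a b hax hbx he))
  have hkey : ∀ a b b' : V, Gi.Adj a b → Gi.Adj a b' → b ≠ b' → b' ≠ x →
      r s(a, b) ≠ r s(a, b') := by
    intro a b b' hab hab' hbb' hb'x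
    by_cases hax : a = x
    · subst hax
      rw [hr, rot_pair, rot_pair]
      apply hc.2 (hsrcv_adj b hab) (hsrcv_adj b' hab')
      intro he
      exact hbb' (hsrcv_inj _ _ hab hab' he)
    · have hfG' : G'.Adj a b' := by
        apply hGi_sub_G' a b' hax hb'x hab'
      have hfeq : r s(a, b') = c s(a, b') := by
        rw [hr, rot_eq_of_not_mem]
        rw [Sym2.mem_iff]; push_neg; exact ⟨Ne.symm hax, Ne.symm hb'x⟩
      by_cases hbx : b = x
      · rw [hbx]
        have hab2 : Gi.Adj a x := hbx ▸ hab
        have heq : r s(a, x) = c s(x, srcv ys x i a) := by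
          rw [hr, Sym2.eq_swap, rot_pair]
        rw [heq, hfeq]
        by_cases hfan_case : ∃ l, l < i ∧ a = ys.getD l x
        · obtain ⟨l, hl, rfl⟩ := hfan_case
          rw [srcv_spec1 hnd (le_of_lt hi) hl]
          exact fun he => (hfan l (by omega) b' hfG' he.symm)
        · push_neg at hfan_case
          rw [srcv_spec2 hfan_case]
          have haxG' : G'.Adj a x := by
            rw [hGi, deleteEdges_adj] at hab2
            rw [hG', deleteEdges_adj]
            refine ⟨hab2.1, ?_⟩
            rw [Set.mem_singleton_iff]
            intro he
            rcases Nat.eq_zero_or_pos i with hi0 | hi0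
            · apply hab2.2
              rw [Set.mem_singleton_iff]
              rw [hyi, hi0, hys0]
              exact he
            · have : a = y := by
                have := Sym2.eq_iff.mp he
                rcases this with ⟨h1, h2⟩ | ⟨h1, h2⟩
                · exact absurd h1 hax
                · exact h1
              exact hfan_case 0 hi0 (this.trans hys0.symm)
          rw [Sym2.eq_swap (a := x) (b := a)]
          exact hc.2 haxG' hfG' (Ne.symm hb'x)
      · have heeq : r s(a, b) = c s(a, b) := by
          rw [hr, rot_eq_of_not_mem]
          rw [Sym2.mem_iff]; push_neg; exact ⟨Ne.symm hax, Ne.symm hbx⟩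
        rw [heeq, hfeq]
        exact hc.2 (hGi_sub_G' a b hax hbx hab) hfG' hbb'
  have hproper : Proper Gi (k + 1) r := by
    refine ⟨hbound, fun a b b' hab hab' hbb' => ?_⟩
    by_cases hb'x : b' = x
    · have hbx : b ≠ x := fun h => hbb' (h.trans hb'x.symm)
      exact fun he => hkey a b' b hab' hab (Ne.symm hbb') hbx he.symm
    · exact hkey a b b' hab hab' hbb' hb'x
  -- freeness of γ at x and yi for the rotated coloring
  have hfree_x : ∀ z, Gi.Adj x z → r s(x, z) ≠ γ := by
    intro z hz
    rw [hr, rot_pair]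
    exact hγx _ (hsrcv_adj z hz)
  have hfree_yi : ∀ z, Gi.Adj yi z → r s(yi, z) ≠ γ := by
    intro z hz
    have hzx : z ≠ x := by
      rintro rfl
      rw [hGi, deleteEdges_adj] at hz
      exact hz.2 (by rw [Set.mem_singleton_iff, Sym2.eq_swap])
    have hyix' : yi ≠ x := (hadj _ hyi_mem).ne'
    rw [hr, rot_eq_of_not_mem (by rw [Sym2.mem_iff]; push_neg; exact ⟨Ne.symm hyix', Ne.symm hzx⟩)]
    exact hγi z (hGi_sub_G' yi z hyix' hzx hz)
  -- final coloring
  refine ⟨fun e => if e = s(x, yi) then γ else r e, ?_, ?_⟩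
  · intro e he
    show (if e = s(x, yi) then γ else r e) < k + 1
    by_cases h : e = s(x, yi)
    · rw [if_pos h]; exact hγ
    · rw [if_neg h]
      apply hbound
      rw [hGi, edgeSet_deleteEdges]
      exact ⟨he, h⟩
  · intro a b b' hab hab' hbb'
    show (if s(a, b) = s(x, yi) then γ else r s(a, b)) ≠
      (if s(a, b') = s(x, yi) then γ else r s(a, b'))
    have key2 : ∀ b b' : V, G.Adj a b → G.Adj a b' → b ≠ b' → s(a, b) = s(x, yi) →
        (if s(a, b) = s(x, yi) then γ else r s(a, b)) ≠
        (if s(a, b') = s(x, yi) then γ else r s(a, b')) := by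
      intro b b' hab hab' hbb' he
      have hf : s(a, b') ≠ s(x, yi) := by
        intro hf
        exact hbb' (Sym2.congr_right.mp (he.trans hf.symm))
      rw [if_pos he, if_neg hf]
      have hGiab' : Gi.Adj a b' := by
        rw [hGi, deleteEdges_adj]
        exact ⟨hab', hf⟩
      rcases Sym2.eq_iff.mp he with ⟨rfl, rfl⟩ | ⟨rfl, rfl⟩
      · exact fun h => hfree_x b' hGiab' h.symm
      · exact fun h => hfree_yi b' hGiab' h.symm
    by_cases he : s(a, b) = s(x, yi)
    · exact key2 b b' hab hab' hbb' he
    · by_cases hf : s(a, b') = s(x, yi)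
      · exact fun h => key2 b' b hab' hab (Ne.symm hbb') hf h.symm
      · rw [if_neg he, if_neg hf]
        apply hproper.2
        · rw [hGi, deleteEdges_adj]; exact ⟨hab, he⟩
        · rw [hGi, deleteEdges_adj]; exact ⟨hab', hf⟩
        · exact hbb'

end Rotate

section Extend

variable {G : SimpleGraph V} {x y : V}

lemma exists_max_fan (hxy : G.Adj x y) (c : Sym2 V → ℕ) :
    ∃ ys : List V, (ys ≠ [] ∧ ys.getD 0 x = y ∧ ys.Nodup ∧ (∀ v ∈ ys, G.Adj x v) ∧
      ∀ l, l + 1 < ys.length → freeAt (G.deleteEdges {s(x, y)}) c (ys.getD l x)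
        (c s(x, ys.getD (l + 1) x))) ∧
      ∀ u, (G.deleteEdges {s(x, y)}).Adj x u →
        freeAt (G.deleteEdges {s(x, y)}) c (ys.getD (ys.length - 1) x) (c s(x, u)) →
        u ∈ ys := by
  set G' := G.deleteEdges {s(x, y)} with hG'
  set Fan : List V → Prop := fun ys => ys ≠ [] ∧ ys.getD 0 x = y ∧ ys.Nodup ∧
    (∀ v ∈ ys, G.Adj x v) ∧
    ∀ l, l + 1 < ys.length → freeAt G' c (ys.getD l x) (c s(x, ys.getD (l + 1) x)) with hFan
  set S : Set ℕ := {n | ∃ ys, Fan ys ∧ ys.length = n} with hS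
  have hS1 : 1 ∈ S := by
    refine ⟨[y], ⟨by simp, by simp, by simp, ?_, ?_⟩, rfl⟩
    · intro v hv
      rw [List.mem_singleton] at hv
      subst hv; exact hxy
    · intro l hl
      simp at hl
  have hbdd : BddAbove S := by
    refine ⟨Fintype.card V, fun n hn => ?_⟩
    obtain ⟨ys, hys, rfl⟩ := hn
    exact hys.2.2.1.length_le_card
  have hmem := Nat.sSup_mem ⟨1, hS1⟩ hbdd
  obtain ⟨ys, hys, hlen⟩ := hmem
  refine ⟨ys, hys, ?_⟩
  intro u hu hfree
  by_contra hu_not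
  have hlenpos : 0 < ys.length := List.length_pos_iff.mpr hys.1
  have hFan' : Fan (ys ++ [u]) := by
    refine ⟨by simp, ?_, ?_, ?_, ?_⟩
    · rw [List.getD_append _ _ _ _ (by omega)]
      exact hys.2.1
    · rw [List.nodup_append]
      exact ⟨hys.2.2.1, List.nodup_singleton u, by
        intro a ha b hb
        rw [List.mem_singleton] at hb
        subst hb
        exact fun h => hu_not (h ▸ ha)⟩
    · intro v hv
      rw [List.mem_append, List.mem_singleton] at hv
      rcases hv with hv | rfl
      · exact hys.2.2.2.1 v hv
      · exact (deleteEdges_adj.mp hu).1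
    · intro l hl
      rw [List.length_append, List.length_singleton] at hl
      by_cases hl2 : l + 1 < ys.length
      · rw [List.getD_append _ _ _ _ (by omega), List.getD_append _ _ _ _ hl2]
        exact hys.2.2.2.2 l hl2
      · have hl3 : l + 1 = ys.length := by omega
        rw [List.getD_append _ _ _ _ (by omega),
          List.getD_append_right _ _ _ _ (by omega), hl3]
        simp only [Nat.sub_self, List.getD_cons_zero]
        have : l = ys.length - 1 := by omega
        rw [this]
        exact hfree
  have : ys.length + 1 ∈ S := ⟨ys ++ [u], hFan', by simp⟩
  have := le_csSup hbdd this
  omega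

lemma extend_coloring {k : ℕ} (hdeg : ∀ v, G.degree v ≤ k)
    (hxy : G.Adj x y) (c : Sym2 V → ℕ)
    (hc : Proper (G.deleteEdges {s(x, y)}) (k + 1) c) :
    ∃ c', Proper G (k + 1) c' := by
  set G' := G.deleteEdges {s(x, y)} with hG'
  obtain ⟨ys, ⟨hne, hys0, hnd, hadj, hfan⟩, hmax⟩ := exists_max_fan hxy c
  have hlen : 0 < ys.length := List.length_pos_iff.mpr hne
  set t := ys.length - 1 with ht
  set yt := ys.getD t x with hyt
  have hdeg' : ∀ v, G'.degree v ≤ k :=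
    fun v => le_trans (degree_mono (deleteEdges_le _) v) (hdeg v)
  obtain ⟨β, hβ, hβt⟩ := exists_free c (hdeg' yt)
  obtain ⟨α, hα, hαx⟩ := exists_free c (hdeg' x)
  have hG'l : ∀ l, 0 < l → l < ys.length → G'.Adj x (ys.getD l x) := by
    intro l hl0 hll
    rw [hG', deleteEdges_adj]
    refine ⟨hadj _ (getD_mem hll), ?_⟩
    rw [Set.mem_singleton_iff, Sym2.congr_right]
    intro he
    rw [← hys0] at he
    exact (by omega : l ≠ 0) (getD_inj hnd hll (by omega) he)
  by_cases hβx : freeAt G' c x β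
  · exact rotate_extend hxy c hc ys hys0 hnd hadj t (by omega)
      (fun l hl => hfan l (by omega)) β hβ hβx hβt
  · unfold freeAt at hβx
    push_neg at hβx
    obtain ⟨z, hzadj, hcz⟩ := hβx
    have hzys : z ∈ ys := hmax z hzadj (by rw [hcz]; exact hβt)
    obtain ⟨j, hj, hjz⟩ := List.getElem_of_mem hzys
    have hzj : ys.getD j x = z := by rw [List.getD_eq_getElem _ _ hj]; exact hjz
    have hj0 : 0 < j := by
      rcases Nat.eq_zero_or_pos j with h0 | h0
      · exfalso
        rw [h0] at hzj
        rw [hys0] at hzj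
        rw [← hzj, hG', deleteEdges_adj] at hzadj
        exact hzadj.2 rfl
      · exact h0
    have hβj1 : freeAt G' c (ys.getD (j - 1) x) β := by
      have hf := hfan (j - 1) (by omega)
      have hj1 : j - 1 + 1 = j := by omega
      rwa [hj1, hzj, hcz] at hf
    have hαβ : α ≠ β := by
      rintro rfl
      exact hαx z hzadj hcz
    set K := kempe G' c α β with hK
    have hK2 : ∀ w, K.degree w ≤ 2 := fun w => kempe_degree_le hc w
    have hKx : K.degree x ≤ 1 := kempe_degree_le_one' hc hαx
    have hKj : K.degree (ys.getD (j - 1) x) ≤ 1 := kempe_degree_le_one hc hβj1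
    have hKt : K.degree yt ≤ 1 := kempe_degree_le_one hc hβt
    have hxj1 : x ≠ ys.getD (j - 1) x := (hadj _ (getD_mem (by omega))).ne
    have hxt : x ≠ yt := (hadj _ (getD_mem (by omega))).ne
    have hj1t : ys.getD (j - 1) x ≠ yt := by
      intro h
      have := getD_inj hnd (by omega) (by omega) h
      omega
    by_cases hr1 : K.Reachable x (ys.getD (j - 1) x)
    · -- case (b-ii): flip the component of yt
      have hr2 : ¬ K.Reachable x yt := fun hr2 =>
        no_three_pendant hK2 hxj1 hxt hj1t hKx hKj hKt hr1 hr2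
      have hrtx : ¬ K.Reachable yt x := fun h => hr2 h.symm
      have hrtj : ¬ K.Reachable yt (ys.getD (j - 1) x) := fun h => hr2 (hr1.trans h.symm)
      set c'' := flip G' c α β yt with hc''def
      have hc'' : Proper G' (k + 1) c'' := flip_proper hc hαβ hα hβ
      have hfαt : freeAt G' c'' yt α := flip_free_swap2 hαβ (Reachable.refl yt) hβt
      have hfαx : freeAt G' c'' x α := flip_free_of_unreachable hrtx hαx
      have hfan'' : ∀ l, l + 1 ≤ t →
          freeAt G' c'' (ys.getD l x) (c'' s(x, ys.getD (l + 1) x)) := by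
        intro l hl
        have hxe : c'' s(x, ys.getD (l + 1) x) = c s(x, ys.getD (l + 1) x) :=
          flip_eq_of_unreachable hrtx _
        rw [hxe]
        have hG'l1 : G'.Adj x (ys.getD (l + 1) x) := hG'l (l + 1) (by omega) (by omega)
        have hδα : c s(x, ys.getD (l + 1) x) ≠ α := hαx _ hG'l1
        by_cases hδβ : c s(x, ys.getD (l + 1) x) = β
        · have : ys.getD (l + 1) x = z := by
            by_contra hne
            exact hc.2 hG'l1 hzadj hne (hδβ.trans hcz.symm)
          rw [← hzj] at this
          have hlj : l + 1 = j := getD_inj hnd (by omega) (by omega) this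
          have hl' : l = j - 1 := by omega
          rw [hδβ, hl']
          exact flip_free_of_unreachable hrtj hβj1
        · exact flip_free_of_ne hδα hδβ (hfan l (by omega))
      exact rotate_extend hxy c'' hc'' ys hys0 hnd hadj t (by omega) hfan'' α hα hfαx hfαt
    · -- case (b-i): flip the component of x
      set c'' := flip G' c α β x with hc''def
      have hc'' : Proper G' (k + 1) c'' := flip_proper hc hαβ hα hβ
      have hfβx : freeAt G' c'' x β := flip_free_swap1 hαβ (Reachable.refl x) hαx
      have hfβj : freeAt G' c'' (ys.getD (j - 1) x) β := flip_free_of_unreachable hr1 hβj1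
      have hfan'' : ∀ l, l + 1 ≤ j - 1 →
          freeAt G' c'' (ys.getD l x) (c'' s(x, ys.getD (l + 1) x)) := by
        intro l hl
        have hG'l1 : G'.Adj x (ys.getD (l + 1) x) := hG'l (l + 1) (by omega) (by omega)
        have hδα : c s(x, ys.getD (l + 1) x) ≠ α := hαx _ hG'l1
        have hδβ : c s(x, ys.getD (l + 1) x) ≠ β := by
          intro hδβ
          have : ys.getD (l + 1) x = z := by
            by_contra hne
            exact hc.2 hG'l1 hzadj hne (hδβ.trans hcz.symm)
          rw [← hzj] at this
          have := getD_inj hnd (by omega) (by omega) this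
          omega
        have hxe : c'' s(x, ys.getD (l + 1) x) = c s(x, ys.getD (l + 1) x) :=
          flip_eq_of_not_colored hδα hδβ
        rw [hxe]
        exact flip_free_of_ne hδα hδβ (hfan l (by omega))
      exact rotate_extend hxy c'' hc'' ys hys0 hnd hadj (j - 1) (by omega) hfan''
        β hβ hfβx hfβj

end Extend

section Vizing

lemma vizing_aux (k : ℕ) : ∀ (n : ℕ) (G : SimpleGraph V), G.edgeFinset.card ≤ n →
    (∀ v, G.degree v ≤ k) → ∃ c, Proper G (k + 1) c := by
  intro n
  induction n with
  | zero =>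
    intro G hcard hdeg
    refine ⟨fun _ => 0, fun e _ => Nat.succ_pos k, fun a b b' hab hab' hbb' => ?_⟩
    exfalso
    have h1 : s(a, b) ∈ G.edgeFinset := mem_edgeFinset.mpr ((mem_edgeSet _).mpr hab)
    have := Finset.card_pos.mpr ⟨_, h1⟩
    omega
  | succ n ih =>
    intro G hcard hdeg
    by_cases hE : G.edgeFinset.Nonempty
    · obtain ⟨e, he⟩ := hE
      induction e with
      | _ x y =>
        have hxy : G.Adj x y := (mem_edgeSet _).mp (mem_edgeFinset.mp he)
        have hsub : (G.deleteEdges {s(x, y)}).edgeFinset ⊆ G.edgeFinset.erase s(x, y) := by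
          intro f hf
          rw [mem_edgeFinset, edgeSet_deleteEdges] at hf
          rw [Finset.mem_erase, mem_edgeFinset]
          exact ⟨hf.2, hf.1⟩
        have hcard' : (G.deleteEdges {s(x, y)}).edgeFinset.card ≤ n := by
          have h1 := Finset.card_le_card hsub
          have h2 := Finset.card_erase_of_mem he
          omega
        have hdeg' : ∀ v, (G.deleteEdges {s(x, y)}).degree v ≤ k :=
          fun v => le_trans (degree_mono (deleteEdges_le _) v) (hdeg v)
        obtain ⟨c, hc⟩ := ih (G.deleteEdges {s(x, y)}) hcard' hdeg'
        exact extend_coloring hdeg hxy c hc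
    · rw [Finset.not_nonempty_iff_eq_empty] at hE
      refine ⟨fun _ => 0, fun e _ => Nat.succ_pos k, fun a b b' hab hab' hbb' => ?_⟩
      exfalso
      have h1 : s(a, b) ∈ G.edgeFinset := mem_edgeFinset.mpr ((mem_edgeSet _).mpr hab)
      rw [hE] at h1
      exact absurd h1 (Finset.notMem_empty _)

theorem vizing (G : SimpleGraph V) :
    ∃ c : Sym2 V → ℕ, Proper G (G.maxDegree + 1) c :=
  vizing_aux G.maxDegree G.edgeFinset.card G le_rfl (fun v => G.degree_le_maxDegree v)

end Vizing

section LineGraph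

lemma lineGraph_colorable (G₀ : SimpleGraph V) {k : ℕ} (c : Sym2 V → ℕ)
    (hc : Proper G₀ (k + 1) c) : G₀.lineGraph.Colorable (k + 1) := by
  refine ⟨Coloring.mk (fun e => ⟨c e.1, hc.1 e.1 e.2⟩) ?_⟩
  intro e f hef
  rw [lineGraph_adj_iff_exists] at hef
  obtain ⟨hne, v, hve, hvf⟩ := hef
  obtain ⟨b, hb⟩ := Sym2.mem_iff_exists.mp hve
  obtain ⟨b', hb'⟩ := Sym2.mem_iff_exists.mp hvf
  have hadj : G₀.Adj v b := (mem_edgeSet _).mp (hb ▸ e.2)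
  have hadj' : G₀.Adj v b' := (mem_edgeSet _).mp (hb' ▸ f.2)
  have hbb' : b ≠ b' := by
    rintro rfl
    exact hne (Subtype.ext (hb.trans hb'.symm))
  intro hEq
  have hval : c e.1 = c f.1 := congrArg Fin.val hEq
  rw [hb, hb'] at hval
  exact hc.2 hadj hadj' hbb' hval

end LineGraph

end VizingPf

/-- If `G` is the line graph of a simple graph, then `χ(G) ≤ Δ₂(G) + 3`. -/
theorem stmt_10 [Fintype V] (G₀ : SimpleGraph V) :
    G₀.lineGraph.chromaticNumber ≤ ((maxCodeg G₀.lineGraph + 3 : ℕ) : ℕ∞) := by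
  classical
  obtain ⟨c, hc⟩ := VizingPf.vizing G₀
  have hcol := VizingPf.lineGraph_colorable G₀ c hc
  have hchrom : G₀.lineGraph.chromaticNumber ≤ ((G₀.maxDegree + 1 : ℕ) : ℕ∞) :=
    hcol.chromaticNumber_le
  have key : G₀.maxDegree + 1 ≤ maxCodeg G₀.lineGraph + 3 := by
    by_cases h2 : G₀.maxDegree ≤ 2
    · omega
    · push_neg at h2
      have hne : Nonempty V := by
        by_contra hne
        have he : IsEmpty V := not_nonempty_iff.mp hne
        have := SimpleGraph.maxDegree_le_of_forall_degree_le (G := G₀) 0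
          (fun v => (he.elim v))
        omega
      obtain ⟨v, hv⟩ := G₀.exists_maximal_degree_vertex
      have hdeg2 : 2 ≤ (G₀.neighborFinset v).card := by
        have : G₀.degree v = (G₀.neighborFinset v).card := rfl
        omega
      obtain ⟨z₁, hz₁, z₂, hz₂, hz12⟩ := (Finset.one_lt_card (s := G₀.neighborFinset v)).mp (by omega)
      rw [SimpleGraph.mem_neighborFinset] at hz₁ hz₂
      have he₁ : s(v, z₁) ∈ G₀.edgeSet := (SimpleGraph.mem_edgeSet _).mpr hz₁
      have he₂ : s(v, z₂) ∈ G₀.edgeSet := (SimpleGraph.mem_edgeSet _).mpr hz₂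
      set E₁ : G₀.edgeSet := ⟨s(v, z₁), he₁⟩ with hE₁
      set E₂ : G₀.edgeSet := ⟨s(v, z₂), he₂⟩ with hE₂
      have hEne : E₁ ≠ E₂ := by
        intro h
        exact hz12 (Sym2.congr_right.mp (congrArg Subtype.val h))
      have hlow : G₀.maxDegree - 2 ≤ codeg G₀.lineGraph E₁ E₂ := by
        have hcard : Nat.card {u : V // u ∈ ((G₀.neighborFinset v).erase z₁).erase z₂} =
            G₀.maxDegree - 2 := by
          rw [Nat.card_eq_finsetCard]
          rw [Finset.card_erase_of_mem (Finset.mem_erase.mpr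
            ⟨Ne.symm hz12, (SimpleGraph.mem_neighborFinset _ _ _).mpr hz₂⟩)]
          rw [Finset.card_erase_of_mem ((SimpleGraph.mem_neighborFinset _ _ _).mpr hz₁)]
          have : G₀.degree v = (G₀.neighborFinset v).card := rfl
          omega
        have hinj : ∃ f : {u : V // u ∈ ((G₀.neighborFinset v).erase z₁).erase z₂} →
            {x : G₀.edgeSet // G₀.lineGraph.Adj E₁ x ∧ G₀.lineGraph.Adj E₂ x},
            Function.Injective f := by
          have hmem : ∀ u : {u : V // u ∈ ((G₀.neighborFinset v).erase z₁).erase z₂},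
              G₀.Adj v u.1 ∧ u.1 ≠ z₂ ∧ u.1 ≠ z₁ := by
            intro u
            have h1 := Finset.mem_erase.mp u.2
            have h2 := Finset.mem_erase.mp h1.2
            exact ⟨(SimpleGraph.mem_neighborFinset _ _ _).mp h2.2, h1.1, h2.1⟩
          refine ⟨fun u => ⟨⟨s(v, u.1), (SimpleGraph.mem_edgeSet _).mpr (hmem u).1⟩, ?_, ?_⟩, ?_⟩
          · rw [SimpleGraph.lineGraph_adj_iff_exists]
            refine ⟨?_, v, by simp [hE₁], by simp⟩
            intro h
            exact (hmem u).2.2 (Sym2.congr_right.mp (congrArg Subtype.val h)).symm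
          · rw [SimpleGraph.lineGraph_adj_iff_exists]
            refine ⟨?_, v, by simp [hE₂], by simp⟩
            intro h
            exact (hmem u).2.1 (Sym2.congr_right.mp (congrArg Subtype.val h)).symm
          · intro u u' huu
            have : s(v, u.1) = s(v, u'.1) :=
              congrArg Subtype.val (congrArg Subtype.val huu)
            exact Subtype.ext (Sym2.congr_right.mp this)
        obtain ⟨f, hf⟩ := hinj
        calc G₀.maxDegree - 2
            = Nat.card {u : V // u ∈ ((G₀.neighborFinset v).erase z₁).erase z₂} := hcard.symm
          _ ≤ Nat.card {x : G₀.edgeSet // G₀.lineGraph.Adj E₁ x ∧ G₀.lineGraph.Adj E₂ x} :=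
              Nat.card_le_card_of_injective f hf
          _ = codeg G₀.lineGraph E₁ E₂ := rfl
      have hbdd : BddAbove {n | ∃ u w : G₀.edgeSet, u ≠ w ∧ codeg G₀.lineGraph u w = n} := by
        refine ⟨Nat.card G₀.edgeSet, ?_⟩
        rintro n ⟨u, w, -, rfl⟩
        exact Nat.card_le_card_of_injective Subtype.val Subtype.val_injective
      have hmem : codeg G₀.lineGraph E₁ E₂ ∈
          {n | ∃ u w : G₀.edgeSet, u ≠ w ∧ codeg G₀.lineGraph u w = n} := ⟨E₁, E₂, hEne, rfl⟩
      have hsup : codeg G₀.lineGraph E₁ E₂ ≤ maxCodeg G₀.lineGraph := le_csSup hbdd hmem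
      omega
  refine le_trans hchrom ?_
  exact_mod_cast Nat.cast_le.mpr key
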